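/- arXiv:1705.06359 — 2 statements merged into one kernel-verified Lean document; each statement's English description precedes it below -/
import Mathlib

section
/- For every integer p ≥ 1, the sets of vertices (extreme points) of the polar polygons are: V(Q̊_p^[1]) = {(−2/(p+1), (p−1)/(p+1)), (1, −(p+1)), (1, 2)}; V(Q̊_p^[2]) = {(−2/(p+1), (p−1)/(p+1)), (0, −1), (1, −p), (1, 2)}; V(Q̊_p^[3]) = {(−2/(p+1), (p−1)/(p+1)), (0, −1), (1, −p), (1, 1), (0, 1)}. -/
/-- Q_p^[1] := conv({(1,−1),(p,1),(−1,0)}). -/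
def Qpoly1 (p : ℤ) : Set (ℝ × ℝ) :=
  convexHull ℝ ({(1, -1), ((p : ℝ), 1), (-1, 0)} : Set (ℝ × ℝ))

/-- Q_p^[2] := conv({(1,−1),(p,1),(p−1,1),(−1,0)}). -/
def Qpoly2 (p : ℤ) : Set (ℝ × ℝ) :=
  convexHull ℝ ({(1, -1), ((p : ℝ), 1), ((p : ℝ) - 1, 1), (-1, 0)} : Set (ℝ × ℝ))

/-- Q_p^[3] := conv({(1,−1),(p,1),(p−1,1),(−1,0),(0,−1)}). -/
def Qpoly3 (p : ℤ) : Set (ℝ × ℝ) :=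
  convexHull ℝ ({(1, -1), ((p : ℝ), 1), ((p : ℝ) - 1, 1), (-1, 0), (0, -1)} : Set (ℝ × ℝ))

/-- Q_p^[k] for k ∈ {1,2,3}. -/
def Qpoly (p : ℤ) (k : ℕ) : Set (ℝ × ℝ) :=
  if k = 1 then Qpoly1 p else if k = 2 then Qpoly2 p else Qpoly3 p

/-- The lattice ℤ² viewed inside ℝ². -/
def latticePts : Set (ℝ × ℝ) := {x | ∃ m n : ℤ, x = ((m : ℝ), (n : ℝ))}

/-- The polar polygon Q̊ := {y : ⟨y,x⟩ ≥ −1 for all x ∈ Q}. -/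
def polar2 (Q : Set (ℝ × ℝ)) : Set (ℝ × ℝ) :=
  {y | ∀ x ∈ Q, -1 ≤ y.1 * x.1 + y.2 * x.2}

/-- ℓ_p := (p+1)/2 if p is odd, p+1 if p is even. -/
def ellp (p : ℤ) : ℤ := if Odd p then (p + 1) / 2 else p + 1

/- ### Auxiliary lemmas -/

lemma polar2_convex (Q : Set (ℝ × ℝ)) : Convex ℝ (polar2 Q) := by
  intro y hy z hz a b ha hb hab x hx
  have h1 := hy x hx
  have h2 := hz x hx
  simp only [Prod.fst_add, Prod.snd_add, Prod.smul_fst, Prod.smul_snd, smul_eq_mul]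
  nlinarith [mul_le_mul_of_nonneg_left h1 ha, mul_le_mul_of_nonneg_left h2 hb]

lemma polar2_hull (S : Set (ℝ × ℝ)) :
    polar2 (convexHull ℝ S) = {y | ∀ x ∈ S, -1 ≤ y.1 * x.1 + y.2 * x.2} := by
  ext y
  constructor
  · intro hy x hx
    exact hy x (subset_convexHull ℝ S hx)
  · intro hy x hx
    have hc : Convex ℝ {x : ℝ × ℝ | -1 ≤ y.1 * x.1 + y.2 * x.2} := by
      intro u hu v hv a b ha hb hab
      simp only [Set.mem_setOf_eq, Prod.fst_add, Prod.snd_add, Prod.smul_fst, Prod.smul_snd,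
        smul_eq_mul] at *
      nlinarith [mul_le_mul_of_nonneg_left hu ha, mul_le_mul_of_nonneg_left hv hb]
    exact convexHull_min hy hc hx

lemma combo3_mem {s : Set (ℝ × ℝ)} (hs : Convex ℝ s) {A B C : ℝ × ℝ}
    (hA : A ∈ s) (hB : B ∈ s) (hC : C ∈ s) {α β γ : ℝ}
    (hα : 0 ≤ α) (hβ : 0 ≤ β) (hγ : 0 ≤ γ) (h : α + β + γ = 1) :
    α • A + β • B + γ • C ∈ s := by
  have := hs.sum_mem (t := (Finset.univ : Finset (Fin 3))) (w := ![α, β, γ]) (z := ![A, B, C])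
    (by intro i _; fin_cases i <;> simpa) (by simp [Fin.sum_univ_three]; linarith)
    (by intro i _; fin_cases i <;> simpa)
  simpa [Fin.sum_univ_three] using this

lemma tight_helper {t u A1 A2 ca : ℝ} (ht : 0 < t) (hu : 0 < u) (htu : t + u = 1)
    (h1 : ca ≤ A1) (h2 : ca ≤ A2) (he : t * A1 + u * A2 = ca) : A1 = ca ∧ A2 = ca := by
  have key : t * (A1 - ca) + u * (A2 - ca) = 0 := by linear_combination he - ca * htu
  have p1 : 0 ≤ t * (A1 - ca) := mul_nonneg ht.le (by linarith)
  have p2 : 0 ≤ u * (A2 - ca) := mul_nonneg hu.le (by linarith)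
  constructor
  · by_contra h
    have hlt : ca < A1 := lt_of_le_of_ne h1 (Ne.symm h)
    have : 0 < t * (A1 - ca) := mul_pos ht (by linarith)
    linarith
  · by_contra h
    have hlt : ca < A2 := lt_of_le_of_ne h2 (Ne.symm h)
    have : 0 < u * (A2 - ca) := mul_pos hu (by linarith)
    linarith

lemma extreme_of_two (s : Set (ℝ × ℝ)) (x a b : ℝ × ℝ) (ca cb : ℝ)
    (hx : x ∈ s)
    (ha : ∀ y ∈ s, ca ≤ a.1 * y.1 + a.2 * y.2) (hb : ∀ y ∈ s, cb ≤ b.1 * y.1 + b.2 * y.2)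
    (hxa : a.1 * x.1 + a.2 * x.2 = ca) (hxb : b.1 * x.1 + b.2 * x.2 = cb)
    (hdet : a.1 * b.2 - a.2 * b.1 ≠ 0) : x ∈ Set.extremePoints ℝ s := by
  refine ⟨hx, fun x₁ hx₁ x₂ hx₂ hseg => ?_⟩
  obtain ⟨t, u, ht, hu, htu, hx'⟩ := hseg
  have ha1 := ha x₁ hx₁
  have ha2 := ha x₂ hx₂
  have hb1 := hb x₁ hx₁
  have hb2 := hb x₂ hx₂
  have h1 : x.1 = t * x₁.1 + u * x₂.1 := by rw [← hx']; simp
  have h2 : x.2 = t * x₁.2 + u * x₂.2 := by rw [← hx']; simp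
  have ea : t * (a.1 * x₁.1 + a.2 * x₁.2) + u * (a.1 * x₂.1 + a.2 * x₂.2) = ca := by
    linear_combination hxa - a.1 * h1 - a.2 * h2
  have eb : t * (b.1 * x₁.1 + b.2 * x₁.2) + u * (b.1 * x₂.1 + b.2 * x₂.2) = cb := by
    linear_combination hxb - b.1 * h1 - b.2 * h2
  obtain ⟨ta1, ta2⟩ := tight_helper ht hu htu ha1 ha2 ea
  obtain ⟨tb1, tb2⟩ := tight_helper ht hu htu hb1 hb2 eb
  have e1 : x₁ = x := by
    have d1 : a.1 * (x₁.1 - x.1) + a.2 * (x₁.2 - x.2) = 0 := by linarith [ta1, hxa]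
    have d2 : b.1 * (x₁.1 - x.1) + b.2 * (x₁.2 - x.2) = 0 := by linarith [tb1, hxb]
    have c1 : (a.1 * b.2 - a.2 * b.1) * (x₁.1 - x.1) = 0 := by
      linear_combination b.2 * d1 - a.2 * d2
    have c2 : (a.1 * b.2 - a.2 * b.1) * (x₁.2 - x.2) = 0 := by
      linear_combination a.1 * d2 - b.1 * d1
    have f1 : x₁.1 = x.1 := by
      rcases mul_eq_zero.mp c1 with h | h
      · exact absurd h hdet
      · linarith
    have f2 : x₁.2 = x.2 := by
      rcases mul_eq_zero.mp c2 with h | h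
      · exact absurd h hdet
      · linarith
    exact Prod.ext f1 f2
  have e2 : x₂ = x := by
    have d1 : a.1 * (x₂.1 - x.1) + a.2 * (x₂.2 - x.2) = 0 := by linarith [ta2, hxa]
    have d2 : b.1 * (x₂.1 - x.1) + b.2 * (x₂.2 - x.2) = 0 := by linarith [tb2, hxb]
    have c1 : (a.1 * b.2 - a.2 * b.1) * (x₂.1 - x.1) = 0 := by
      linear_combination b.2 * d1 - a.2 * d2
    have c2 : (a.1 * b.2 - a.2 * b.1) * (x₂.2 - x.2) = 0 := by
      linear_combination a.1 * d2 - b.1 * d1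
    have f1 : x₂.1 = x.1 := by
      rcases mul_eq_zero.mp c1 with h | h
      · exact absurd h hdet
      · linarith
    have f2 : x₂.2 = x.2 := by
      rcases mul_eq_zero.mp c2 with h | h
      · exact absurd h hdet
      · linarith
    exact Prod.ext f1 f2
  exact e1

/- ### Halfplane characterizations of the polars -/

lemma char1 (p : ℤ) (y : ℝ × ℝ) :
    y ∈ polar2 (Qpoly1 p) ↔
      (-1 ≤ y.1 - y.2 ∧ -1 ≤ (p : ℝ) * y.1 + y.2 ∧ y.1 ≤ 1) := by
  rw [Qpoly1, polar2_hull]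
  constructor
  · intro h
    have h1 := h (1, -1) (by simp)
    have h2 := h ((p : ℝ), 1) (by simp)
    have h3 := h (-1, 0) (by simp)
    norm_num at h1 h2 h3
    refine ⟨by linarith, by linarith, by linarith⟩
  · rintro ⟨c1, c2, c3⟩ x hx
    simp only [Set.mem_insert_iff, Set.mem_singleton_iff] at hx
    rcases hx with rfl | rfl | rfl <;> norm_num <;> linarith

lemma char2 (p : ℤ) (y : ℝ × ℝ) :
    y ∈ polar2 (Qpoly2 p) ↔
      (-1 ≤ y.1 - y.2 ∧ -1 ≤ (p : ℝ) * y.1 + y.2 ∧ -1 ≤ ((p : ℝ) - 1) * y.1 + y.2 ∧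
        y.1 ≤ 1) := by
  rw [Qpoly2, polar2_hull]
  constructor
  · intro h
    have h1 := h (1, -1) (by simp)
    have h2 := h ((p : ℝ), 1) (by simp)
    have h2' := h ((p : ℝ) - 1, 1) (by simp)
    have h3 := h (-1, 0) (by simp)
    norm_num at h1 h2 h2' h3
    refine ⟨by linarith, by linarith, by linarith, by linarith⟩
  · rintro ⟨c1, c2, c2', c3⟩ x hx
    simp only [Set.mem_insert_iff, Set.mem_singleton_iff] at hx
    rcases hx with rfl | rfl | rfl | rfl <;> norm_num <;> linarith

lemma char3 (p : ℤ) (y : ℝ × ℝ) :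
    y ∈ polar2 (Qpoly3 p) ↔
      (-1 ≤ y.1 - y.2 ∧ -1 ≤ (p : ℝ) * y.1 + y.2 ∧ -1 ≤ ((p : ℝ) - 1) * y.1 + y.2 ∧
        y.1 ≤ 1 ∧ y.2 ≤ 1) := by
  rw [Qpoly3, polar2_hull]
  constructor
  · intro h
    have h1 := h (1, -1) (by simp)
    have h2 := h ((p : ℝ), 1) (by simp)
    have h2' := h ((p : ℝ) - 1, 1) (by simp)
    have h3 := h (-1, 0) (by simp)
    have h4 := h (0, -1) (by simp)
    norm_num at h1 h2 h2' h3 h4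
    refine ⟨by linarith, by linarith, by linarith, by linarith, by linarith⟩
  · rintro ⟨c1, c2, c2', c3, c4⟩ x hx
    simp only [Set.mem_insert_iff, Set.mem_singleton_iff] at hx
    rcases hx with rfl | rfl | rfl | rfl | rfl <;> norm_num <;> linarith

/- ### Hull descriptions of the polars -/

lemma heq1 (p : ℤ) (hp' : (1 : ℝ) ≤ (p : ℝ)) :
    polar2 (Qpoly1 p) = convexHull ℝ
      ({(-2 / ((p : ℝ) + 1), ((p : ℝ) - 1) / ((p : ℝ) + 1)), (1, -((p : ℝ) + 1)), (1, 2)} :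
        Set (ℝ × ℝ)) := by
  have hq : (0:ℝ) < (p:ℝ) + 1 := by linarith
  have hq0 : ((p:ℝ) + 1) ≠ 0 := ne_of_gt hq
  have hp3 : (0:ℝ) < (p:ℝ) + 3 := by linarith
  have hp30 : ((p:ℝ) + 3) ≠ 0 := ne_of_gt hp3
  apply Set.Subset.antisymm
  · intro y hy
    obtain ⟨c1, c2, c3⟩ := (char1 p y).1 hy
    have hy_eq : y = ((1 - y.1) * ((p:ℝ) + 1) / ((p:ℝ) + 3)) •
          ((-2 / ((p : ℝ) + 1), ((p : ℝ) - 1) / ((p : ℝ) + 1)) : ℝ × ℝ) +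
        ((y.1 - y.2 + 1) / ((p:ℝ) + 3)) • ((1, -((p : ℝ) + 1)) : ℝ × ℝ) +
        (((p:ℝ) * y.1 + y.2 + 1) / ((p:ℝ) + 3)) • ((1, 2) : ℝ × ℝ) := by
      refine Prod.ext ?_ ?_ <;>
        simp only [Prod.fst_add, Prod.snd_add, Prod.smul_fst, Prod.smul_snd, smul_eq_mul] <;>
        field_simp <;> ring
    rw [hy_eq]
    refine combo3_mem (convex_convexHull ℝ _) (subset_convexHull ℝ _ (by simp))
      (subset_convexHull ℝ _ (by simp)) (subset_convexHull ℝ _ (by simp))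
      (div_nonneg (mul_nonneg (by linarith) (by linarith)) hp3.le)
      (div_nonneg (by linarith) hp3.le) (div_nonneg (by linarith) hp3.le) ?_
    field_simp
    ring
  · apply convexHull_min ?_ (polar2_convex _)
    intro x hx
    simp only [Set.mem_insert_iff, Set.mem_singleton_iff] at hx
    have e1 : -2 / ((p:ℝ) + 1) - ((p:ℝ) - 1) / ((p:ℝ) + 1) = -((p:ℝ)+1) / ((p:ℝ)+1) := by
      field_simp; ring
    have e2 : (p:ℝ) * (-2 / ((p:ℝ) + 1)) + ((p:ℝ) - 1) / ((p:ℝ) + 1) =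
        -((p:ℝ)+1) / ((p:ℝ)+1) := by field_simp; ring
    rcases hx with rfl | rfl | rfl
    · rw [char1]
      refine ⟨?_, ?_, ?_⟩
      · show -1 ≤ -2 / ((p:ℝ) + 1) - ((p:ℝ) - 1) / ((p:ℝ) + 1)
        rw [e1, le_div_iff₀ hq]; linarith
      · show -1 ≤ (p:ℝ) * (-2 / ((p:ℝ) + 1)) + ((p:ℝ) - 1) / ((p:ℝ) + 1)
        rw [e2, le_div_iff₀ hq]; linarith
      · show -2 / ((p:ℝ) + 1) ≤ 1
        rw [div_le_one hq]; linarith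
    · rw [char1]
      refine ⟨?_, ?_, ?_⟩ <;> (try norm_num) <;> (try linarith)
    · rw [char1]
      refine ⟨?_, ?_, ?_⟩ <;> (try norm_num) <;> (try linarith)

lemma heq2 (p : ℤ) (hp' : (1 : ℝ) ≤ (p : ℝ)) :
    polar2 (Qpoly2 p) = convexHull ℝ
      ({(-2 / ((p : ℝ) + 1), ((p : ℝ) - 1) / ((p : ℝ) + 1)), (0, -1), (1, -(p : ℝ)), (1, 2)} :
        Set (ℝ × ℝ)) := by
  have hq : (0:ℝ) < (p:ℝ) + 1 := by linarith
  have hq0 : ((p:ℝ) + 1) ≠ 0 := ne_of_gt hq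
  have hp2 : (0:ℝ) < (p:ℝ) + 2 := by linarith
  have hp20 : ((p:ℝ) + 2) ≠ 0 := ne_of_gt hp2
  have hp3 : (0:ℝ) < (p:ℝ) + 3 := by linarith
  have hp30 : ((p:ℝ) + 3) ≠ 0 := ne_of_gt hp3
  apply Set.Subset.antisymm
  · intro y hy
    obtain ⟨c1, c2, c2', c3⟩ := (char2 p y).1 hy
    rcases le_or_gt (3 * y.1 - y.2 - 1) 0 with hL | hL
    · -- triangle A, (0,-1), (1,2)
      have hy_eq : y = ((1 + y.2 - 3 * y.1) * ((p:ℝ) + 1) / (2 * ((p:ℝ) + 3))) •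
            ((-2 / ((p : ℝ) + 1), ((p : ℝ) - 1) / ((p : ℝ) + 1)) : ℝ × ℝ) +
          ((y.1 - y.2 + 1) / 2) • ((0, -1) : ℝ × ℝ) +
          (((p:ℝ) * y.1 + y.2 + 1) / ((p:ℝ) + 3)) • ((1, 2) : ℝ × ℝ) := by
        refine Prod.ext ?_ ?_ <;>
          simp only [Prod.fst_add, Prod.snd_add, Prod.smul_fst, Prod.smul_snd, smul_eq_mul] <;>
          field_simp <;> ring
      rw [hy_eq]
      refine combo3_mem (convex_convexHull ℝ _) (subset_convexHull ℝ _ (by simp))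
        (subset_convexHull ℝ _ (by simp)) (subset_convexHull ℝ _ (by simp))
        (div_nonneg (mul_nonneg (by linarith) (by linarith)) (by linarith))
        (div_nonneg (by linarith) (by norm_num)) (div_nonneg (by linarith) hp3.le) ?_
      field_simp
      ring
    · -- triangle (0,-1), (1,-p), (1,2)
      have hy_eq : y = (1 - y.1) • ((0, -1) : ℝ × ℝ) +
          ((3 * y.1 - y.2 - 1) / ((p:ℝ) + 2)) • ((1, -(p : ℝ)) : ℝ × ℝ) +
          ((((p:ℝ) - 1) * y.1 + y.2 + 1) / ((p:ℝ) + 2)) • ((1, 2) : ℝ × ℝ) := by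
        refine Prod.ext ?_ ?_ <;>
          simp only [Prod.fst_add, Prod.snd_add, Prod.smul_fst, Prod.smul_snd, smul_eq_mul] <;>
          field_simp <;> ring
      rw [hy_eq]
      refine combo3_mem (convex_convexHull ℝ _) (subset_convexHull ℝ _ (by simp))
        (subset_convexHull ℝ _ (by simp)) (subset_convexHull ℝ _ (by simp))
        (by linarith) (div_nonneg (by linarith) hp2.le)
        (div_nonneg (by linarith) hp2.le) ?_
      field_simp
      ring
  · apply convexHull_min ?_ (polar2_convex _)
    intro x hx
    simp only [Set.mem_insert_iff, Set.mem_singleton_iff] at hx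
    have e1 : -2 / ((p:ℝ) + 1) - ((p:ℝ) - 1) / ((p:ℝ) + 1) = -((p:ℝ)+1) / ((p:ℝ)+1) := by
      field_simp; ring
    have e2 : (p:ℝ) * (-2 / ((p:ℝ) + 1)) + ((p:ℝ) - 1) / ((p:ℝ) + 1) =
        -((p:ℝ)+1) / ((p:ℝ)+1) := by field_simp; ring
    have e3 : ((p:ℝ) - 1) * (-2 / ((p:ℝ) + 1)) + ((p:ℝ) - 1) / ((p:ℝ) + 1) =
        (-((p:ℝ) - 1)) / ((p:ℝ)+1) := by field_simp; ring
    rcases hx with rfl | rfl | rfl | rfl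
    · rw [char2]
      refine ⟨?_, ?_, ?_, ?_⟩
      · show -1 ≤ -2 / ((p:ℝ) + 1) - ((p:ℝ) - 1) / ((p:ℝ) + 1)
        rw [e1, le_div_iff₀ hq]; linarith
      · show -1 ≤ (p:ℝ) * (-2 / ((p:ℝ) + 1)) + ((p:ℝ) - 1) / ((p:ℝ) + 1)
        rw [e2, le_div_iff₀ hq]; linarith
      · show -1 ≤ ((p:ℝ) - 1) * (-2 / ((p:ℝ) + 1)) + ((p:ℝ) - 1) / ((p:ℝ) + 1)
        rw [e3, le_div_iff₀ hq]; linarith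
      · show -2 / ((p:ℝ) + 1) ≤ 1
        rw [div_le_one hq]; linarith
    · rw [char2]
      refine ⟨?_, ?_, ?_, ?_⟩ <;> (try norm_num) <;> (try linarith)
    · rw [char2]
      refine ⟨?_, ?_, ?_, ?_⟩ <;> (try norm_num) <;> (try linarith)
    · rw [char2]
      refine ⟨?_, ?_, ?_, ?_⟩ <;> (try norm_num) <;> (try linarith)

lemma heq3 (p : ℤ) (hp' : (1 : ℝ) ≤ (p : ℝ)) :
    polar2 (Qpoly3 p) = convexHull ℝ
      ({(-2 / ((p : ℝ) + 1), ((p : ℝ) - 1) / ((p : ℝ) + 1)), (0, -1), (1, -(p : ℝ)), (1, 1),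
        (0, 1)} : Set (ℝ × ℝ)) := by
  have hq : (0:ℝ) < (p:ℝ) + 1 := by linarith
  have hq0 : ((p:ℝ) + 1) ≠ 0 := ne_of_gt hq
  apply Set.Subset.antisymm
  · intro y hy
    obtain ⟨c1, c2, c2', c3, c4⟩ := (char3 p y).1 hy
    rcases le_or_gt y.1 0 with hM | hM
    · -- triangle A, (0,-1), (0,1)
      have hy_eq : y = (-y.1 * ((p:ℝ) + 1) / 2) •
            ((-2 / ((p : ℝ) + 1), ((p : ℝ) - 1) / ((p : ℝ) + 1)) : ℝ × ℝ) +
          ((y.1 - y.2 + 1) / 2) • ((0, -1) : ℝ × ℝ) +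
          (((p:ℝ) * y.1 + y.2 + 1) / 2) • ((0, 1) : ℝ × ℝ) := by
        refine Prod.ext ?_ ?_ <;>
          simp only [Prod.fst_add, Prod.snd_add, Prod.smul_fst, Prod.smul_snd, smul_eq_mul] <;>
          field_simp <;> ring
      rw [hy_eq]
      refine combo3_mem (convex_convexHull ℝ _) (subset_convexHull ℝ _ (by simp))
        (subset_convexHull ℝ _ (by simp)) (subset_convexHull ℝ _ (by simp))
        (div_nonneg (mul_nonneg (by linarith) (by linarith)) (by norm_num))
        (div_nonneg (by linarith) (by norm_num)) (div_nonneg (by linarith) (by norm_num)) ?_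
      field_simp
      ring
    · rcases le_or_gt (2 * y.1 - y.2 - 1) 0 with hN | hN
      · -- triangle (0,-1), (0,1), (1,1)
        have hy_eq : y = ((1 - y.2) / 2) • ((0, -1) : ℝ × ℝ) +
            ((y.2 - 2 * y.1 + 1) / 2) • ((0, 1) : ℝ × ℝ) + y.1 • ((1, 1) : ℝ × ℝ) := by
          refine Prod.ext ?_ ?_ <;>
            simp only [Prod.fst_add, Prod.snd_add, Prod.smul_fst, Prod.smul_snd, smul_eq_mul] <;>
            ring
        rw [hy_eq]
        refine combo3_mem (convex_convexHull ℝ _) (subset_convexHull ℝ _ (by simp))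
          (subset_convexHull ℝ _ (by simp)) (subset_convexHull ℝ _ (by simp))
          (div_nonneg (by linarith) (by norm_num)) (div_nonneg (by linarith) (by norm_num))
          (by linarith) (by ring)
      · -- triangle (0,-1), (1,1), (1,-p)
        have hy_eq : y = (1 - y.1) • ((0, -1) : ℝ × ℝ) +
            ((((p:ℝ) - 1) * y.1 + y.2 + 1) / ((p:ℝ) + 1)) • ((1, 1) : ℝ × ℝ) +
            ((2 * y.1 - y.2 - 1) / ((p:ℝ) + 1)) • ((1, -(p : ℝ)) : ℝ × ℝ) := by
          refine Prod.ext ?_ ?_ <;>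
            simp only [Prod.fst_add, Prod.snd_add, Prod.smul_fst, Prod.smul_snd, smul_eq_mul] <;>
            field_simp <;> ring
        rw [hy_eq]
        refine combo3_mem (convex_convexHull ℝ _) (subset_convexHull ℝ _ (by simp))
          (subset_convexHull ℝ _ (by simp)) (subset_convexHull ℝ _ (by simp))
          (by linarith) (div_nonneg (by linarith) hq.le) (div_nonneg (by linarith) hq.le) ?_
        field_simp
        ring
  · apply convexHull_min ?_ (polar2_convex _)
    intro x hx
    simp only [Set.mem_insert_iff, Set.mem_singleton_iff] at hx
    have e1 : -2 / ((p:ℝ) + 1) - ((p:ℝ) - 1) / ((p:ℝ) + 1) = -((p:ℝ)+1) / ((p:ℝ)+1) := by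
      field_simp; ring
    have e2 : (p:ℝ) * (-2 / ((p:ℝ) + 1)) + ((p:ℝ) - 1) / ((p:ℝ) + 1) =
        -((p:ℝ)+1) / ((p:ℝ)+1) := by field_simp; ring
    have e3 : ((p:ℝ) - 1) * (-2 / ((p:ℝ) + 1)) + ((p:ℝ) - 1) / ((p:ℝ) + 1) =
        (-((p:ℝ) - 1)) / ((p:ℝ)+1) := by field_simp; ring
    rcases hx with rfl | rfl | rfl | rfl | rfl
    · rw [char3]
      refine ⟨?_, ?_, ?_, ?_, ?_⟩
      · show -1 ≤ -2 / ((p:ℝ) + 1) - ((p:ℝ) - 1) / ((p:ℝ) + 1)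
        rw [e1, le_div_iff₀ hq]; linarith
      · show -1 ≤ (p:ℝ) * (-2 / ((p:ℝ) + 1)) + ((p:ℝ) - 1) / ((p:ℝ) + 1)
        rw [e2, le_div_iff₀ hq]; linarith
      · show -1 ≤ ((p:ℝ) - 1) * (-2 / ((p:ℝ) + 1)) + ((p:ℝ) - 1) / ((p:ℝ) + 1)
        rw [e3, le_div_iff₀ hq]; linarith
      · show -2 / ((p:ℝ) + 1) ≤ 1
        rw [div_le_one hq]; linarith
      · show ((p:ℝ) - 1) / ((p:ℝ) + 1) ≤ 1
        rw [div_le_one hq]; linarith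
    · rw [char3]
      refine ⟨?_, ?_, ?_, ?_, ?_⟩ <;> (try norm_num) <;> (try linarith)
    · rw [char3]
      refine ⟨?_, ?_, ?_, ?_, ?_⟩ <;> (try norm_num) <;> (try linarith)
    · rw [char3]
      refine ⟨?_, ?_, ?_, ?_, ?_⟩ <;> (try norm_num) <;> (try linarith)
    · rw [char3]
      refine ⟨?_, ?_, ?_, ?_, ?_⟩ <;> (try norm_num) <;> (try linarith)

/- ### Main theorem -/

/-- the vertex sets of the polar polygons Q̊_p^[k], k = 1,2,3. -/
theorem stmt10 (p : ℤ) (hp : 1 ≤ p) :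
    Set.extremePoints ℝ (polar2 (Qpoly1 p)) =
      ({(-2 / ((p : ℝ) + 1), ((p : ℝ) - 1) / ((p : ℝ) + 1)), (1, -((p : ℝ) + 1)), (1, 2)} :
        Set (ℝ × ℝ)) ∧
    Set.extremePoints ℝ (polar2 (Qpoly2 p)) =
      ({(-2 / ((p : ℝ) + 1), ((p : ℝ) - 1) / ((p : ℝ) + 1)), (0, -1), (1, -(p : ℝ)), (1, 2)} :
        Set (ℝ × ℝ)) ∧
    Set.extremePoints ℝ (polar2 (Qpoly3 p)) =
      ({(-2 / ((p : ℝ) + 1), ((p : ℝ) - 1) / ((p : ℝ) + 1)), (0, -1), (1, -(p : ℝ)), (1, 1),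
        (0, 1)} : Set (ℝ × ℝ)) := by
  have hp' : (1 : ℝ) ≤ (p : ℝ) := by exact_mod_cast hp
  have hq : (0:ℝ) < (p:ℝ) + 1 := by linarith
  have hq0 : ((p:ℝ) + 1) ≠ 0 := ne_of_gt hq
  refine ⟨?_, ?_, ?_⟩
  · -- polygon 1
    apply Set.Subset.antisymm
    · rw [heq1 p hp']
      exact extremePoints_convexHull_subset
    · intro y hy
      have hyp : y ∈ polar2 (Qpoly1 p) := by
        rw [heq1 p hp']; exact subset_convexHull ℝ _ hy
      have hcon1 : ∀ z ∈ polar2 (Qpoly1 p),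
          (-1:ℝ) ≤ ((1:ℝ), (-1:ℝ)).1 * z.1 + ((1:ℝ), (-1:ℝ)).2 * z.2 := by
        intro z hz
        obtain ⟨d1, d2, d3⟩ := (char1 p z).1 hz
        show (-1:ℝ) ≤ 1 * z.1 + (-1) * z.2
        linarith
      have hcon2 : ∀ z ∈ polar2 (Qpoly1 p),
          (-1:ℝ) ≤ ((p:ℝ), (1:ℝ)).1 * z.1 + ((p:ℝ), (1:ℝ)).2 * z.2 := by
        intro z hz
        obtain ⟨d1, d2, d3⟩ := (char1 p z).1 hz
        show (-1:ℝ) ≤ (p:ℝ) * z.1 + 1 * z.2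
        linarith
      have hcon3 : ∀ z ∈ polar2 (Qpoly1 p),
          (-1:ℝ) ≤ ((-1:ℝ), (0:ℝ)).1 * z.1 + ((-1:ℝ), (0:ℝ)).2 * z.2 := by
        intro z hz
        obtain ⟨d1, d2, d3⟩ := (char1 p z).1 hz
        show (-1:ℝ) ≤ (-1) * z.1 + 0 * z.2
        linarith
      simp only [Set.mem_insert_iff, Set.mem_singleton_iff] at hy
      rcases hy with rfl | rfl | rfl
      · exact extreme_of_two _ _ ((1:ℝ), (-1:ℝ)) ((p:ℝ), (1:ℝ)) (-1) (-1) hyp hcon1 hcon2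
          (by show (1:ℝ) * (-2 / ((p:ℝ)+1)) + (-1) * (((p:ℝ)-1)/((p:ℝ)+1)) = -1
              field_simp; ring)
          (by show (p:ℝ) * (-2 / ((p:ℝ)+1)) + 1 * (((p:ℝ)-1)/((p:ℝ)+1)) = -1
              field_simp; ring)
          (by show (1:ℝ) * 1 - (-1) * (p:ℝ) ≠ 0
              intro h; nlinarith)
      · exact extreme_of_two _ _ ((p:ℝ), (1:ℝ)) ((-1:ℝ), (0:ℝ)) (-1) (-1) hyp hcon2 hcon3
          (by show (p:ℝ) * 1 + 1 * (-((p:ℝ)+1)) = -1; ring)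
          (by show (-1:ℝ) * 1 + 0 * (-((p:ℝ)+1)) = -1; ring)
          (by show (p:ℝ) * 0 - 1 * (-1) ≠ 0; norm_num)
      · exact extreme_of_two _ _ ((1:ℝ), (-1:ℝ)) ((-1:ℝ), (0:ℝ)) (-1) (-1) hyp hcon1 hcon3
          (by show (1:ℝ) * 1 + (-1) * 2 = -1; ring)
          (by show (-1:ℝ) * 1 + 0 * 2 = -1; ring)
          (by show (1:ℝ) * 0 - (-1) * (-1) ≠ 0; norm_num)
  · -- polygon 2
    apply Set.Subset.antisymm
    · rw [heq2 p hp']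
      exact extremePoints_convexHull_subset
    · intro y hy
      have hyp : y ∈ polar2 (Qpoly2 p) := by
        rw [heq2 p hp']; exact subset_convexHull ℝ _ hy
      have hcon1 : ∀ z ∈ polar2 (Qpoly2 p),
          (-1:ℝ) ≤ ((1:ℝ), (-1:ℝ)).1 * z.1 + ((1:ℝ), (-1:ℝ)).2 * z.2 := by
        intro z hz
        obtain ⟨d1, d2, d2', d3⟩ := (char2 p z).1 hz
        show (-1:ℝ) ≤ 1 * z.1 + (-1) * z.2
        linarith
      have hcon2 : ∀ z ∈ polar2 (Qpoly2 p),
          (-1:ℝ) ≤ ((p:ℝ), (1:ℝ)).1 * z.1 + ((p:ℝ), (1:ℝ)).2 * z.2 := by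
        intro z hz
        obtain ⟨d1, d2, d2', d3⟩ := (char2 p z).1 hz
        show (-1:ℝ) ≤ (p:ℝ) * z.1 + 1 * z.2
        linarith
      have hcon2' : ∀ z ∈ polar2 (Qpoly2 p),
          (-1:ℝ) ≤ ((p:ℝ) - 1, (1:ℝ)).1 * z.1 + ((p:ℝ) - 1, (1:ℝ)).2 * z.2 := by
        intro z hz
        obtain ⟨d1, d2, d2', d3⟩ := (char2 p z).1 hz
        show (-1:ℝ) ≤ ((p:ℝ) - 1) * z.1 + 1 * z.2
        linarith
      have hcon3 : ∀ z ∈ polar2 (Qpoly2 p),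
          (-1:ℝ) ≤ ((-1:ℝ), (0:ℝ)).1 * z.1 + ((-1:ℝ), (0:ℝ)).2 * z.2 := by
        intro z hz
        obtain ⟨d1, d2, d2', d3⟩ := (char2 p z).1 hz
        show (-1:ℝ) ≤ (-1) * z.1 + 0 * z.2
        linarith
      simp only [Set.mem_insert_iff, Set.mem_singleton_iff] at hy
      rcases hy with rfl | rfl | rfl | rfl
      · exact extreme_of_two _ _ ((1:ℝ), (-1:ℝ)) ((p:ℝ), (1:ℝ)) (-1) (-1) hyp hcon1 hcon2
          (by show (1:ℝ) * (-2 / ((p:ℝ)+1)) + (-1) * (((p:ℝ)-1)/((p:ℝ)+1)) = -1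
              field_simp; ring)
          (by show (p:ℝ) * (-2 / ((p:ℝ)+1)) + 1 * (((p:ℝ)-1)/((p:ℝ)+1)) = -1
              field_simp; ring)
          (by show (1:ℝ) * 1 - (-1) * (p:ℝ) ≠ 0
              intro h; nlinarith)
      · exact extreme_of_two _ _ ((p:ℝ), (1:ℝ)) ((p:ℝ) - 1, (1:ℝ)) (-1) (-1) hyp hcon2 hcon2'
          (by show (p:ℝ) * 0 + 1 * (-1) = -1; ring)
          (by show ((p:ℝ) - 1) * 0 + 1 * (-1) = -1; ring)
          (by show (p:ℝ) * 1 - 1 * ((p:ℝ) - 1) ≠ 0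
              intro h; nlinarith)
      · exact extreme_of_two _ _ ((p:ℝ) - 1, (1:ℝ)) ((-1:ℝ), (0:ℝ)) (-1) (-1) hyp hcon2' hcon3
          (by show ((p:ℝ) - 1) * 1 + 1 * (-(p:ℝ)) = -1; ring)
          (by show (-1:ℝ) * 1 + 0 * (-(p:ℝ)) = -1; ring)
          (by show ((p:ℝ) - 1) * 0 - 1 * (-1) ≠ 0; norm_num)
      · exact extreme_of_two _ _ ((1:ℝ), (-1:ℝ)) ((-1:ℝ), (0:ℝ)) (-1) (-1) hyp hcon1 hcon3
          (by show (1:ℝ) * 1 + (-1) * 2 = -1; ring)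
          (by show (-1:ℝ) * 1 + 0 * 2 = -1; ring)
          (by show (1:ℝ) * 0 - (-1) * (-1) ≠ 0; norm_num)
  · -- polygon 3
    apply Set.Subset.antisymm
    · rw [heq3 p hp']
      exact extremePoints_convexHull_subset
    · intro y hy
      have hyp : y ∈ polar2 (Qpoly3 p) := by
        rw [heq3 p hp']; exact subset_convexHull ℝ _ hy
      have hcon1 : ∀ z ∈ polar2 (Qpoly3 p),
          (-1:ℝ) ≤ ((1:ℝ), (-1:ℝ)).1 * z.1 + ((1:ℝ), (-1:ℝ)).2 * z.2 := by
        intro z hz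
        obtain ⟨d1, d2, d2', d3, d4⟩ := (char3 p z).1 hz
        show (-1:ℝ) ≤ 1 * z.1 + (-1) * z.2
        linarith
      have hcon2 : ∀ z ∈ polar2 (Qpoly3 p),
          (-1:ℝ) ≤ ((p:ℝ), (1:ℝ)).1 * z.1 + ((p:ℝ), (1:ℝ)).2 * z.2 := by
        intro z hz
        obtain ⟨d1, d2, d2', d3, d4⟩ := (char3 p z).1 hz
        show (-1:ℝ) ≤ (p:ℝ) * z.1 + 1 * z.2
        linarith
      have hcon2' : ∀ z ∈ polar2 (Qpoly3 p),
          (-1:ℝ) ≤ ((p:ℝ) - 1, (1:ℝ)).1 * z.1 + ((p:ℝ) - 1, (1:ℝ)).2 * z.2 := by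
        intro z hz
        obtain ⟨d1, d2, d2', d3, d4⟩ := (char3 p z).1 hz
        show (-1:ℝ) ≤ ((p:ℝ) - 1) * z.1 + 1 * z.2
        linarith
      have hcon3 : ∀ z ∈ polar2 (Qpoly3 p),
          (-1:ℝ) ≤ ((-1:ℝ), (0:ℝ)).1 * z.1 + ((-1:ℝ), (0:ℝ)).2 * z.2 := by
        intro z hz
        obtain ⟨d1, d2, d2', d3, d4⟩ := (char3 p z).1 hz
        show (-1:ℝ) ≤ (-1) * z.1 + 0 * z.2
        linarith
      have hcon4 : ∀ z ∈ polar2 (Qpoly3 p),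
          (-1:ℝ) ≤ ((0:ℝ), (-1:ℝ)).1 * z.1 + ((0:ℝ), (-1:ℝ)).2 * z.2 := by
        intro z hz
        obtain ⟨d1, d2, d2', d3, d4⟩ := (char3 p z).1 hz
        show (-1:ℝ) ≤ 0 * z.1 + (-1) * z.2
        linarith
      simp only [Set.mem_insert_iff, Set.mem_singleton_iff] at hy
      rcases hy with rfl | rfl | rfl | rfl | rfl
      · exact extreme_of_two _ _ ((1:ℝ), (-1:ℝ)) ((p:ℝ), (1:ℝ)) (-1) (-1) hyp hcon1 hcon2
          (by show (1:ℝ) * (-2 / ((p:ℝ)+1)) + (-1) * (((p:ℝ)-1)/((p:ℝ)+1)) = -1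
              field_simp; ring)
          (by show (p:ℝ) * (-2 / ((p:ℝ)+1)) + 1 * (((p:ℝ)-1)/((p:ℝ)+1)) = -1
              field_simp; ring)
          (by show (1:ℝ) * 1 - (-1) * (p:ℝ) ≠ 0
              intro h; nlinarith)
      · exact extreme_of_two _ _ ((p:ℝ), (1:ℝ)) ((p:ℝ) - 1, (1:ℝ)) (-1) (-1) hyp hcon2 hcon2'
          (by show (p:ℝ) * 0 + 1 * (-1) = -1; ring)
          (by show ((p:ℝ) - 1) * 0 + 1 * (-1) = -1; ring)
          (by show (p:ℝ) * 1 - 1 * ((p:ℝ) - 1) ≠ 0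
              intro h; nlinarith)
      · exact extreme_of_two _ _ ((p:ℝ) - 1, (1:ℝ)) ((-1:ℝ), (0:ℝ)) (-1) (-1) hyp hcon2' hcon3
          (by show ((p:ℝ) - 1) * 1 + 1 * (-(p:ℝ)) = -1; ring)
          (by show (-1:ℝ) * 1 + 0 * (-(p:ℝ)) = -1; ring)
          (by show ((p:ℝ) - 1) * 0 - 1 * (-1) ≠ 0; norm_num)
      · exact extreme_of_two _ _ ((-1:ℝ), (0:ℝ)) ((0:ℝ), (-1:ℝ)) (-1) (-1) hyp hcon3 hcon4
          (by show (-1:ℝ) * 1 + 0 * 1 = -1; ring)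
          (by show (0:ℝ) * 1 + (-1) * 1 = -1; ring)
          (by show (-1:ℝ) * (-1) - 0 * 0 ≠ 0; norm_num)
      · exact extreme_of_two _ _ ((1:ℝ), (-1:ℝ)) ((0:ℝ), (-1:ℝ)) (-1) (-1) hyp hcon1 hcon4
          (by show (1:ℝ) * 0 + (-1) * 1 = -1; ring)
          (by show (0:ℝ) * 0 + (-1) * 1 = -1; ring)
          (by show (1:ℝ) * (-1) - (-1) * 0 ≠ 0; norm_num)
end

section
/- For every integer p ≥ 1 and k ∈ {1,2,3}, twice the area of the dilated polar polygon ℓ_p·Q̊_p^[k] equals: for k = 1, (p+1)(p+3)²/4 if p is odd and (p+1)(p+3)² if p is even; for k = 2, (p+1)(p²+5p+8)/4 if p is odd and (p+1)(p²+5p+8) if p is even; for k = 3, (p+1)(p²+4p+7)/4 if p is odd and (p+1)(p²+4p+7) if p is even. -/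
open Pointwise

open MeasureTheory Set

section Aux

lemma polar2_convexHull (S : Set (ℝ × ℝ)) : polar2 (convexHull ℝ S) = polar2 S := by
  ext y
  constructor
  · intro h x hx; exact h x (subset_convexHull ℝ S hx)
  · intro h x hx
    have hlin : IsLinearMap ℝ (fun x : ℝ × ℝ => y.1 * x.1 + y.2 * x.2) := by
      constructor <;> intros <;> simp [smul_eq_mul] <;> ring
    exact convexHull_min (fun z hz => h z hz) (convex_halfSpace_ge hlin (-1)) hx

lemma vol_region (f g : ℝ → ℝ) (hf : Measurable f) (hg : Measurable g)
    (s : Set ℝ) (hs : MeasurableSet s) :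
    volume {y : ℝ × ℝ | y.1 ∈ s ∧ f y.1 ≤ y.2 ∧ y.2 ≤ g y.1}
      = ∫⁻ a in s, ENNReal.ofReal (g a - f a) := by
  have hmeas : MeasurableSet {y : ℝ × ℝ | y.1 ∈ s ∧ f y.1 ≤ y.2 ∧ y.2 ≤ g y.1} := by
    have : {y : ℝ × ℝ | y.1 ∈ s ∧ f y.1 ≤ y.2 ∧ y.2 ≤ g y.1}
        = (Prod.fst ⁻¹' s) ∩ ({y : ℝ × ℝ | f y.1 ≤ y.2} ∩ {y : ℝ × ℝ | y.2 ≤ g y.1}) := by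
      ext y; simp [and_assoc]
    rw [this]
    exact (hs.preimage measurable_fst).inter
      ((measurableSet_le (hf.comp measurable_fst) measurable_snd).inter
        (measurableSet_le measurable_snd (hg.comp measurable_fst)))
  rw [Measure.volume_eq_prod, Measure.prod_apply hmeas]
  have hsl : ∀ a : ℝ, volume (Prod.mk a ⁻¹' {y : ℝ × ℝ | y.1 ∈ s ∧ f y.1 ≤ y.2 ∧ y.2 ≤ g y.1})
      = s.indicator (fun a => ENNReal.ofReal (g a - f a)) a := by
    intro a
    by_cases ha : a ∈ s
    · have : Prod.mk a ⁻¹' {y : ℝ × ℝ | y.1 ∈ s ∧ f y.1 ≤ y.2 ∧ y.2 ≤ g y.1} = Icc (f a) (g a) := by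
        ext b; simp [ha, and_comm]
      rw [this, Real.volume_Icc, indicator_of_mem ha]
    · have : Prod.mk a ⁻¹' {y : ℝ × ℝ | y.1 ∈ s ∧ f y.1 ≤ y.2 ∧ y.2 ≤ g y.1} = ∅ := by
        ext b; simp [ha]
      rw [this, indicator_of_notMem ha]; simp
  simp_rw [hsl]
  exact lintegral_indicator hs _

lemma lint_linear (c d lo hi : ℝ) (hle : lo ≤ hi) (h0 : 0 ≤ c * lo + d) (h1 : 0 ≤ c * hi + d) :
    ∫⁻ a in Icc lo hi, ENNReal.ofReal (c * a + d)
      = ENNReal.ofReal (c * (hi ^ 2 - lo ^ 2) / 2 + d * (hi - lo)) := by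
  have hpos : ∀ a ∈ Icc lo hi, 0 ≤ c * a + d := by
    rintro a ⟨ha1, ha2⟩
    rcases eq_or_lt_of_le hle with h | h
    · have : a = lo := le_antisymm (h ▸ ha2) ha1
      rwa [this]
    · nlinarith [mul_nonneg (sub_nonneg.2 ha1) h1, mul_nonneg (sub_nonneg.2 ha2) h0]
  have hcont : Continuous (fun a : ℝ => c * a + d) := by continuity
  rw [← ofReal_integral_eq_lintegral_ofReal (hcont.integrableOn_Icc)
      ((ae_restrict_iff' measurableSet_Icc).2 (ae_of_all _ hpos))]
  congr 1
  rw [integral_Icc_eq_integral_Ioc, ← intervalIntegral.integral_of_le hle]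
  have hD : ∀ a : ℝ, HasDerivAt (fun a : ℝ => c * a ^ 2 / 2 + d * a) (c * a + d) a := by
    intro a
    have h1 : HasDerivAt (fun a : ℝ => c * a ^ 2 / 2) (c * a) a := by
      have := (hasDerivAt_pow 2 a).const_mul (c / 2)
      exact (this.congr_deriv (by rw [show (2:ℕ) - 1 = 1 from rfl]; push_cast; ring)).congr_of_eventuallyEq
        (Filter.Eventually.of_forall fun x => by ring)
    exact (h1.add ((hasDerivAt_id a).const_mul d)).congr_deriv (by ring)
  rw [intervalIntegral.integral_eq_sub_of_hasDerivAt (fun a _ => hD a)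
      (hcont.intervalIntegrable _ _)]
  ring

/-- Lower boundary function for the polars of Qpoly2/Qpoly3. -/
noncomputable def flow (p : ℤ) (a : ℝ) : ℝ := if a ≤ 0 then -1 - p * a else -1 - ((p:ℝ) - 1) * a

/-- Upper boundary function for the polar of Qpoly3. -/
noncomputable def gup (a : ℝ) : ℝ := if a ≤ 0 then a + 1 else 1

lemma flow_measurable (p : ℤ) : Measurable (flow p) := by
  unfold flow
  exact Measurable.ite measurableSet_Iic (by fun_prop) (by fun_prop)

lemma gup_measurable : Measurable gup := by
  unfold gup
  exact Measurable.ite measurableSet_Iic (by fun_prop) (by fun_prop)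

lemma region1 (p : ℤ) (hp : 1 ≤ p) :
    polar2 (Qpoly1 p) = {y : ℝ × ℝ | y.1 ∈ Icc (-2 / ((p : ℝ) + 1)) 1 ∧
      (fun a : ℝ => -1 - p * a) y.1 ≤ y.2 ∧ y.2 ≤ (fun a : ℝ => a + 1) y.1} := by
  have hq : (0:ℝ) < (p:ℝ) + 1 := by
    have : (1:ℝ) ≤ (p:ℝ) := by exact_mod_cast hp
    linarith
  rw [Qpoly1, polar2_convexHull]
  ext y
  simp only [polar2, mem_insert_iff, mem_singleton_iff, mem_setOf_eq, forall_eq_or_imp, forall_eq,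
    mem_Icc]
  constructor
  · rintro ⟨h1, h2, h3⟩
    simp only [mul_one, mul_neg, mul_zero] at h1 h2 h3
    refine ⟨⟨?_, by linarith⟩, by linarith, by linarith⟩
    rw [div_le_iff₀ hq]
    nlinarith
  · rintro ⟨⟨hlo, hhi⟩, hf, hg⟩
    have hf' : -1 - (p:ℝ) * y.1 ≤ y.2 := hf
    have hg' : y.2 ≤ y.1 + 1 := hg
    refine ⟨?_, ?_, ?_⟩ <;> nlinarith

lemma region2 (p : ℤ) (hp : 1 ≤ p) :
    polar2 (Qpoly2 p) = {y : ℝ × ℝ | y.1 ∈ Icc (-2 / ((p : ℝ) + 1)) 1 ∧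
      flow p y.1 ≤ y.2 ∧ y.2 ≤ (fun a : ℝ => a + 1) y.1} := by
  have hq : (0:ℝ) < (p:ℝ) + 1 := by
    have : (1:ℝ) ≤ (p:ℝ) := by exact_mod_cast hp
    linarith
  rw [Qpoly2, polar2_convexHull]
  ext y
  simp only [polar2, mem_insert_iff, mem_singleton_iff, mem_setOf_eq, forall_eq_or_imp, forall_eq,
    mem_Icc]
  constructor
  · rintro ⟨h1, h2, h3, h4⟩
    refine ⟨⟨?_, by nlinarith⟩, ?_, by nlinarith⟩
    · rw [div_le_iff₀ hq]; nlinarith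
    · rw [flow]; split <;> nlinarith
  · rintro ⟨⟨hlo, hhi⟩, hf, hg⟩
    have hg' : y.2 ≤ y.1 + 1 := hg
    rw [flow] at hf
    refine ⟨?_, ?_, ?_, ?_⟩ <;> rcases le_or_gt y.1 0 with h0 | h0 <;>
      simp only [if_pos, if_neg, h0, not_le] at hf <;> nlinarith

lemma region3 (p : ℤ) (hp : 1 ≤ p) :
    polar2 (Qpoly3 p) = {y : ℝ × ℝ | y.1 ∈ Icc (-2 / ((p : ℝ) + 1)) 1 ∧
      flow p y.1 ≤ y.2 ∧ y.2 ≤ gup y.1} := by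
  have hq : (0:ℝ) < (p:ℝ) + 1 := by
    have : (1:ℝ) ≤ (p:ℝ) := by exact_mod_cast hp
    linarith
  rw [Qpoly3, polar2_convexHull]
  ext y
  simp only [polar2, mem_insert_iff, mem_singleton_iff, mem_setOf_eq, forall_eq_or_imp, forall_eq,
    mem_Icc]
  constructor
  · rintro ⟨h1, h2, h3, h4, h5⟩
    refine ⟨⟨?_, by nlinarith⟩, ?_, ?_⟩
    · rw [div_le_iff₀ hq]; nlinarith
    · rw [flow]; split <;> nlinarith
    · rw [gup]; split <;> nlinarith
  · rintro ⟨⟨hlo, hhi⟩, hf, hg⟩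
    rw [flow] at hf; rw [gup] at hg
    refine ⟨?_, ?_, ?_, ?_, ?_⟩ <;> rcases le_or_gt y.1 0 with h0 | h0 <;>
      simp only [if_pos, if_neg, h0, not_le] at hf hg <;> nlinarith

end Aux

section Vols

variable (p : ℤ)

lemma hq_pos (hp : 1 ≤ p) : (0:ℝ) < (p:ℝ) + 1 := by
  have : (1:ℝ) ≤ (p:ℝ) := by exact_mod_cast hp
  linarith

lemma lo_le_zero (hp : 1 ≤ p) : -2 / ((p:ℝ) + 1) ≤ 0 := by
  have := hq_pos p hp
  apply div_nonpos_of_nonpos_of_nonneg <;> linarith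

lemma vol1 (hp : 1 ≤ p) :
    volume (polar2 (Qpoly1 p)) = ENNReal.ofReal (((p:ℝ) + 3) ^ 2 / (2 * ((p:ℝ) + 1))) := by
  have hq := hq_pos p hp
  have hp1 : (1:ℝ) ≤ (p:ℝ) := by exact_mod_cast hp
  rw [region1 p hp, vol_region (fun a : ℝ => -1 - p * a) (fun a : ℝ => a + 1)
    (by fun_prop) (by fun_prop) _ measurableSet_Icc]
  have h : ∫⁻ a in Icc (-2 / ((p:ℝ) + 1)) 1, ENNReal.ofReal ((fun a : ℝ => a + 1) a - (fun a : ℝ => -1 - p * a) a)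
      = ∫⁻ a in Icc (-2 / ((p:ℝ) + 1)) 1, ENNReal.ofReal (((p:ℝ) + 1) * a + 2) := by
    refine setLIntegral_congr_fun measurableSet_Icc (fun a _ => ?_)
    congr 1; ring
  rw [h, lint_linear ((p:ℝ)+1) 2 (-2 / ((p:ℝ) + 1)) 1 (le_trans (lo_le_zero p hp) zero_le_one)
    (by field_simp; ring_nf; norm_num) (by nlinarith)]
  congr 1
  field_simp
  ring

lemma vol2 (hp : 1 ≤ p) :
    volume (polar2 (Qpoly2 p)) =
      ENNReal.ofReal (((p:ℝ) ^ 2 + 5 * p + 8) / (2 * ((p:ℝ) + 1))) := by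
  have hq := hq_pos p hp
  have hp1 : (1:ℝ) ≤ (p:ℝ) := by exact_mod_cast hp
  have hlo := lo_le_zero p hp
  rw [region2 p hp, vol_region (flow p) (fun a : ℝ => a + 1)
    (flow_measurable p) (by fun_prop) _ measurableSet_Icc]
  rw [← Icc_union_Ioc_eq_Icc hlo zero_le_one,
    lintegral_union measurableSet_Ioc
      ((Iic_disjoint_Ioi le_rfl).mono Icc_subset_Iic_self Ioc_subset_Ioi_self)]
  have hA : ∫⁻ a in Icc (-2 / ((p:ℝ) + 1)) 0,
        ENNReal.ofReal ((fun a : ℝ => a + 1) a - flow p a)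
      = ENNReal.ofReal (2 / ((p:ℝ) + 1)) := by
    have h : ∫⁻ a in Icc (-2 / ((p:ℝ) + 1)) 0,
          ENNReal.ofReal ((fun a : ℝ => a + 1) a - flow p a)
        = ∫⁻ a in Icc (-2 / ((p:ℝ) + 1)) 0, ENNReal.ofReal (((p:ℝ) + 1) * a + 2) := by
      refine setLIntegral_congr_fun measurableSet_Icc
        (fun a (ha : a ∈ Icc (-2/((p:ℝ)+1)) 0) => ?_)
      rw [flow, if_pos ha.2]
      congr 1; ring
    rw [h, lint_linear ((p:ℝ)+1) 2 (-2 / ((p:ℝ) + 1)) 0 hlo (by field_simp; ring_nf; norm_num) (by norm_num)]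
    congr 1
    field_simp
    ring
  have hB : ∫⁻ a in Ioc (0:ℝ) 1, ENNReal.ofReal ((fun a : ℝ => a + 1) a - flow p a)
      = ENNReal.ofReal ((p:ℝ) / 2 + 2) := by
    rw [Measure.restrict_congr_set Ioc_ae_eq_Icc]
    have h : ∫⁻ a in Icc (0:ℝ) 1, ENNReal.ofReal ((fun a : ℝ => a + 1) a - flow p a)
        = ∫⁻ a in Icc (0:ℝ) 1, ENNReal.ofReal ((p:ℝ) * a + 2) := by
      refine setLIntegral_congr_fun measurableSet_Icc
        (fun a (ha : a ∈ Icc (0:ℝ) 1) => ?_)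
      rw [flow]
      rcases eq_or_lt_of_le ha.1 with h | h
      · rw [if_pos h.symm.le, ← h]; congr 1; ring
      · rw [if_neg (not_le.2 h)]; congr 1; ring
    rw [h, lint_linear (p:ℝ) 2 0 1 zero_le_one (by norm_num) (by nlinarith)]
    congr 1
    ring
  rw [hA, hB, ← ENNReal.ofReal_add (by positivity) (by nlinarith)]
  congr 1
  field_simp
  ring

lemma vol3 (hp : 1 ≤ p) :
    volume (polar2 (Qpoly3 p)) =
      ENNReal.ofReal (((p:ℝ) ^ 2 + 4 * p + 7) / (2 * ((p:ℝ) + 1))) := by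
  have hq := hq_pos p hp
  have hp1 : (1:ℝ) ≤ (p:ℝ) := by exact_mod_cast hp
  have hlo := lo_le_zero p hp
  rw [region3 p hp, vol_region (flow p) gup (flow_measurable p) gup_measurable _
    measurableSet_Icc]
  rw [← Icc_union_Ioc_eq_Icc hlo zero_le_one,
    lintegral_union measurableSet_Ioc
      ((Iic_disjoint_Ioi le_rfl).mono Icc_subset_Iic_self Ioc_subset_Ioi_self)]
  have hA : ∫⁻ a in Icc (-2 / ((p:ℝ) + 1)) 0, ENNReal.ofReal (gup a - flow p a)
      = ENNReal.ofReal (2 / ((p:ℝ) + 1)) := by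
    have h : ∫⁻ a in Icc (-2 / ((p:ℝ) + 1)) 0, ENNReal.ofReal (gup a - flow p a)
        = ∫⁻ a in Icc (-2 / ((p:ℝ) + 1)) 0, ENNReal.ofReal (((p:ℝ) + 1) * a + 2) := by
      refine setLIntegral_congr_fun measurableSet_Icc
        (fun a (ha : a ∈ Icc (-2/((p:ℝ)+1)) 0) => ?_)
      rw [gup, flow, if_pos ha.2, if_pos ha.2]
      congr 1; ring
    rw [h, lint_linear ((p:ℝ)+1) 2 (-2 / ((p:ℝ) + 1)) 0 hlo (by field_simp; ring_nf; norm_num) (by norm_num)]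
    congr 1
    field_simp
    ring
  have hB : ∫⁻ a in Ioc (0:ℝ) 1, ENNReal.ofReal (gup a - flow p a)
      = ENNReal.ofReal (((p:ℝ) - 1) / 2 + 2) := by
    rw [Measure.restrict_congr_set Ioc_ae_eq_Icc]
    have h : ∫⁻ a in Icc (0:ℝ) 1, ENNReal.ofReal (gup a - flow p a)
        = ∫⁻ a in Icc (0:ℝ) 1, ENNReal.ofReal (((p:ℝ) - 1) * a + 2) := by
      refine setLIntegral_congr_fun measurableSet_Icc
        (fun a (ha : a ∈ Icc (0:ℝ) 1) => ?_)
      rw [gup, flow]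
      rcases eq_or_lt_of_le ha.1 with h | h
      · rw [if_pos h.symm.le, if_pos h.symm.le, ← h]; congr 1; ring
      · rw [if_neg (not_le.2 h), if_neg (not_le.2 h)]; congr 1; ring
    rw [h, lint_linear ((p:ℝ)-1) 2 0 1 zero_le_one (by norm_num) (by nlinarith)]
    congr 1
    ring
  rw [hA, hB, ← ENNReal.ofReal_add (by positivity) (by nlinarith)]
  congr 1
  field_simp
  ring

end Vols

lemma vol_smul (r : ℝ) (s : Set (ℝ × ℝ)) :
    volume (r • s) = ENNReal.ofReal (|r| ^ 2) * volume s := by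
  rw [Measure.addHaar_smul volume r s]
  simp [abs_pow, ENNReal.ofReal]

/-- twice the area of ℓ_p·Q̊_p^[k] (the projective degree d_{Q_p^[k]}). -/
theorem stmt12 (p : ℤ) (hp : 1 ≤ p) (k : ℕ) (hk : k ∈ ({1, 2, 3} : Set ℕ)) :
    (Odd p →
      2 * MeasureTheory.volume ((ellp p : ℝ) • polar2 (Qpoly p k)) =
        ENNReal.ofReal (((p : ℝ) + 1) *
          (if k = 1 then ((p : ℝ) + 3) ^ 2
           else if k = 2 then (p : ℝ) ^ 2 + 5 * p + 8
           else (p : ℝ) ^ 2 + 4 * p + 7) / 4)) ∧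
    (Even p →
      2 * MeasureTheory.volume ((ellp p : ℝ) • polar2 (Qpoly p k)) =
        ENNReal.ofReal (((p : ℝ) + 1) *
          (if k = 1 then ((p : ℝ) + 3) ^ 2
           else if k = 2 then (p : ℝ) ^ 2 + 5 * p + 8
           else (p : ℝ) ^ 2 + 4 * p + 7))) := by
  have hq := hq_pos p hp
  have hp1 : (1:ℝ) ≤ (p:ℝ) := by exact_mod_cast hp
  -- the numerator polynomial
  set P : ℝ := (if k = 1 then ((p : ℝ) + 3) ^ 2
           else if k = 2 then (p : ℝ) ^ 2 + 5 * p + 8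
           else (p : ℝ) ^ 2 + 4 * p + 7) with hP
  have hvol : volume (polar2 (Qpoly p k)) = ENNReal.ofReal (P / (2 * ((p:ℝ) + 1))) := by
    simp only [mem_insert_iff, mem_singleton_iff] at hk
    rcases hk with rfl | rfl | rfl
    · simpa only [Qpoly, if_pos rfl, hP, if_pos rfl, if_true] using vol1 p hp
    · simpa only [Qpoly, hP, if_true, if_false, (by decide : (2:ℕ) = 1 ↔ False)] using vol2 p hp
    · simpa only [Qpoly, hP, if_false, (by decide : (3:ℕ) = 1 ↔ False), (by decide : (3:ℕ) = 2 ↔ False)] using vol3 p hp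
  constructor
  · intro hodd
    have hell : ((ellp p : ℤ) : ℝ) = ((p:ℝ) + 1) / 2 := by
      obtain ⟨m, hm⟩ := hodd
      have h2 : ellp p = m + 1 := by rw [ellp, if_pos ⟨m, hm⟩]; omega
      rw [h2]
      have : (p:ℝ) = 2 * (m:ℝ) + 1 := by exact_mod_cast congrArg (Int.cast : ℤ → ℝ) hm
      rw [this]; push_cast; ring
    rw [vol_smul, hvol, hell,
      ← ENNReal.ofReal_mul (by positivity), ← ENNReal.ofReal_ofNat 2,
      ← ENNReal.ofReal_mul (by norm_num)]
    congr 1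
    rw [abs_of_pos (by positivity : (0:ℝ) < ((p:ℝ) + 1) / 2)]
    field_simp
    ring
  · intro heven
    have hell : ((ellp p : ℤ) : ℝ) = (p:ℝ) + 1 := by
      rw [ellp, if_neg ((Int.not_odd_iff_even.mpr heven))]
      push_cast; ring
    rw [vol_smul, hvol, hell,
      ← ENNReal.ofReal_mul (by positivity), ← ENNReal.ofReal_ofNat 2,
      ← ENNReal.ofReal_mul (by norm_num)]
    congr 1
    rw [abs_of_pos hq]
    field_simp
end
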